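/- arXiv:2107.00228 — 6 statements merged into one kernel-verified Lean document; each statement's English description precedes it below -/
import Mathlib

section
/- Let σ > 0, let x, δ ∈ ℝ^m with δ ≠ 0, and let a ∈ ℝ. Consider the half-space H = {z ∈ ℝ^m : ⟨δ, z − x⟩ ≤ σ‖δ‖₂ · a}. Then the isotropic Gaussian measure N(x, σ²I) assigns H measure Φ(a), and the shifted isotropic Gaussian measure N(x + δ, σ²I) assigns H measure Φ(a − ‖δ‖₂/σ). -/
open MeasureTheory ProbabilityTheory Real
open scoped RealInnerProductSpace ENNReal NNReal

/-- The standard Gaussian CDF `Φ`. -/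
noncomputable def Phi (a : ℝ) : ℝ := ((gaussianReal 0 1) (Set.Iic a)).toReal

/-- The isotropic Gaussian measure `N(x, σ²I)` on `ℝ^m`, as the product of
one-dimensional Gaussians with means `x i` and variance `σ²`. -/
noncomputable def gaussPi (m : ℕ) (σ : ℝ) (x : EuclideanSpace ℝ (Fin m)) :
    Measure (EuclideanSpace ℝ (Fin m)) :=
  (Measure.pi fun i => gaussianReal (x i) ⟨σ ^ 2, sq_nonneg σ⟩).map
    (MeasurableEquiv.toLp 2 (Fin m → ℝ))

lemma lintegral_pi_prod {n : ℕ} (μ : Fin n → Measure ℝ) [∀ i, SigmaFinite (μ i)]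
    (f : Fin n → ℝ → ℝ≥0∞) (hf : ∀ i, Measurable (f i)) :
    ∫⁻ x, ∏ i, f i (x i) ∂Measure.pi μ = ∏ i, ∫⁻ t, f i t ∂μ i := by
  induction n with
  | zero => simp
  | succ n ih =>
    have h := (measurePreserving_piFinSuccAbove μ 0).symm
    rw [← h.lintegral_comp_emb (MeasurableEquiv.measurableEmbedding _)
      (fun x => ∏ i, f i (x i))]
    simp_rw [MeasurableEquiv.piFinSuccAbove_symm_apply, Fin.insertNthEquiv,
      Equiv.coe_fn_mk, Fin.insertNth_zero]
    simp_rw [Fin.prod_univ_succ, Fin.cons_zero, Fin.cons_succ, cast_eq, Fin.zero_succAbove]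
    have hmeas : Measurable fun (y : Fin n → ℝ) => ∏ j, f (Fin.succ j) (y j) :=
      Finset.measurable_prod _ fun j _ => (hf _).comp (measurable_pi_apply j)
    rw [lintegral_prod_mul ((hf 0)).aemeasurable hmeas.aemeasurable,
      ih (fun j => μ j.succ) (fun j => f j.succ) (fun j => hf _)]

lemma pi_withDensity {n : ℕ} (μ : Fin n → Measure ℝ) [∀ i, SigmaFinite (μ i)]
    (f : Fin n → ℝ → ℝ≥0∞) (hf : ∀ i, Measurable (f i))
    [∀ i, SigmaFinite ((μ i).withDensity (f i))] :
    Measure.pi (fun i => (μ i).withDensity (f i)) =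
      (Measure.pi μ).withDensity fun x => ∏ i, f i (x i) := by
  refine Measure.pi_eq fun s hs => ?_
  have hbox : MeasurableSet (Set.univ.pi s) := MeasurableSet.univ_pi hs
  rw [withDensity_apply _ hbox, ← lintegral_indicator hbox]
  have hind : (Set.univ.pi s).indicator (fun x => ∏ i, f i (x i))
      = fun x => ∏ i, (s i).indicator (f i) (x i) := by
    funext x
    by_cases hx : x ∈ Set.univ.pi s
    · rw [Set.indicator_of_mem hx]
      exact Finset.prod_congr rfl fun i _ =>
        (Set.indicator_of_mem (hx i (Set.mem_univ i)) _).symm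
    · rw [Set.indicator_of_notMem hx]
      rw [Set.mem_univ_pi] at hx
      push_neg at hx
      obtain ⟨i, hi⟩ := hx
      exact (Finset.prod_eq_zero (Finset.mem_univ i)
        (Set.indicator_of_notMem hi _)).symm
  rw [hind, lintegral_pi_prod μ _ (fun i => (hf i).indicator (hs i))]
  exact Finset.prod_congr rfl fun i _ => by
    rw [lintegral_indicator (hs i), withDensity_apply _ (hs i)]

lemma map_withDensity_equiv {α : Type*} [MeasurableSpace α] (μ : Measure α) (e : α ≃ᵐ α)
    (he : MeasurePreserving e μ μ) (F : α → ℝ≥0∞) (hF : Measurable F) :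
    Measure.map e (μ.withDensity F) = μ.withDensity (fun z => F (e.symm z)) := by
  ext s hs
  rw [Measure.map_apply e.measurable hs, withDensity_apply _ (e.measurable hs),
    withDensity_apply _ hs]
  have : ∫⁻ y in s, F (e.symm y) ∂μ = ∫⁻ x in e ⁻¹' s, F (e.symm (e x)) ∂μ := by
    conv_lhs => rw [← he.map_eq]
    exact setLIntegral_map hs (hF.comp e.symm.measurable) e.measurable
  rw [this]
  simp

lemma volume_euclidean (m : ℕ) :
    (volume : Measure (EuclideanSpace ℝ (Fin m))) =
      (Measure.pi (fun _ => volume)).map (MeasurableEquiv.toLp 2 (Fin m → ℝ)) := by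
  exact (EuclideanSpace.volume_preserving_symm_measurableEquiv_toLp (Fin m)).symm.map_eq.symm

lemma prod_gaussianPDF_eq {m : ℕ} {σ : ℝ} (hσ : 0 < σ) (z : EuclideanSpace ℝ (Fin m)) :
    (∏ i, gaussianPDF 0 ⟨σ ^ 2, sq_nonneg σ⟩ (z i))
      = ENNReal.ofReal ((Real.sqrt (2 * π * σ ^ 2))⁻¹ ^ m
          * Real.exp (-‖z‖ ^ 2 / (2 * σ ^ 2))) := by
  simp_rw [gaussianPDF]
  refine (ENNReal.ofReal_prod_of_nonneg (fun i _ => gaussianPDFReal_nonneg _ _ _)).symm.trans ?_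
  congr 1
  simp_rw [gaussianPDFReal, sub_zero]
  change ∏ i, (√(2 * π * σ ^ 2))⁻¹ * rexp (-z i ^ 2 / (2 * σ ^ 2)) = _
  rw [Finset.prod_mul_distrib, Finset.prod_const, Finset.card_univ, Fintype.card_fin,
    ← Real.exp_sum]
  congr 1
  rw [← Finset.sum_div, Finset.sum_neg_distrib]
  congr 3
  have : ‖z‖ = Real.sqrt (∑ i, z i ^ 2) := by
    rw [EuclideanSpace.norm_eq]
    congr 1
    exact Finset.sum_congr rfl fun i _ => by rw [Real.norm_eq_abs, sq_abs]
  rw [this, Real.sq_sqrt (Finset.sum_nonneg fun i _ => sq_nonneg _)]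

lemma var_ne_zero {σ : ℝ} (hσ : 0 < σ) : (⟨σ ^ 2, sq_nonneg σ⟩ : ℝ≥0) ≠ 0 := by
  intro h
  exact (pow_ne_zero 2 hσ.ne') (congrArg NNReal.toReal h)

lemma gaussPi_eq_withDensity (m : ℕ) {σ : ℝ} (hσ : 0 < σ) (x : EuclideanSpace ℝ (Fin m)) :
    gaussPi m σ x = (volume : Measure (EuclideanSpace ℝ (Fin m))).withDensity
      (fun z => ∏ i, gaussianPDF (x i) ⟨σ ^ 2, sq_nonneg σ⟩ (z i)) := by
  have hv := var_ne_zero hσ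
  rw [gaussPi, volume_euclidean]
  have h1 : (fun i : Fin m => gaussianReal (x i) ⟨σ ^ 2, sq_nonneg σ⟩)
      = fun i => (volume : Measure ℝ).withDensity (gaussianPDF (x i) ⟨σ ^ 2, sq_nonneg σ⟩) := by
    funext i; exact gaussianReal_of_var_ne_zero _ hv
  rw [h1]
  have : ∀ i : Fin m, SigmaFinite
      ((volume : Measure ℝ).withDensity (gaussianPDF (x i) ⟨σ ^ 2, sq_nonneg σ⟩)) := by
    intro i
    rw [← gaussianReal_of_var_ne_zero _ hv]
    haveI := instIsProbabilityMeasureGaussianReal (x i) ⟨σ ^ 2, sq_nonneg σ⟩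
    infer_instance
  have hF : Measurable fun z : EuclideanSpace ℝ (Fin m) =>
      ∏ i, gaussianPDF (x i) ⟨σ ^ 2, sq_nonneg σ⟩ (z i) :=
    Finset.measurable_prod _ fun i _ =>
      (measurable_gaussianPDF _ _).comp ((measurable_pi_apply i).comp (WithLp.measurable_ofLp _ _))
  refine (congrArg (Measure.map _) (pi_withDensity _ _ (fun i => measurable_gaussianPDF _ _))).trans ?_
  ext s hs
  rw [Measure.map_apply (MeasurableEquiv.measurable _) hs, withDensity_apply _ hs,
    withDensity_apply _ ((MeasurableEquiv.measurable _) hs),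
    setLIntegral_map hs hF (MeasurableEquiv.measurable _)]
  rfl

lemma gaussPi_map_add (m : ℕ) {σ : ℝ} (hσ : 0 < σ) (x : EuclideanSpace ℝ (Fin m)) :
    gaussPi m σ x = Measure.map (· + x) (gaussPi m σ 0) := by
  let e : EuclideanSpace ℝ (Fin m) ≃ᵐ EuclideanSpace ℝ (Fin m) :=
    (Homeomorph.addRight x).toMeasurableEquiv
  have he : MeasurePreserving e volume volume := measurePreserving_add_right volume x
  have hF : Measurable fun z : EuclideanSpace ℝ (Fin m) =>
      ∏ i, gaussianPDF (0 : ℝ) ⟨σ ^ 2, sq_nonneg σ⟩ (z i) :=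
    Finset.measurable_prod _ fun i _ =>
      (measurable_gaussianPDF _ _).comp ((measurable_pi_apply i).comp (WithLp.measurable_ofLp _ _))
  have : Measure.map (· + x) (gaussPi m σ 0) = Measure.map e (gaussPi m σ 0) := rfl
  rw [this, gaussPi_eq_withDensity m hσ 0]
  simp only [show ∀ i : Fin m, ((0 : EuclideanSpace ℝ (Fin m)) i) = (0:ℝ) from fun _ => rfl]
  rw [map_withDensity_equiv _ e he _ hF, gaussPi_eq_withDensity m hσ x]
  congr 1
  funext z
  refine Finset.prod_congr rfl fun i _ => ?_
  have hsymm : e.symm z = z - x := rfl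
  rw [hsymm]
  have hcoord : (z - x) i = z i - x i := rfl
  rw [hcoord]
  exact (congrArg ENNReal.ofReal ((gaussianPDFReal_sub (μ := 0) (v := ⟨σ ^ 2, sq_nonneg σ⟩) (z i) (x i)).trans
    (congrArg (fun μ => gaussianPDFReal μ _ (z i)) (zero_add (x i))))).symm

lemma gaussPi_map_isometry (m : ℕ) {σ : ℝ} (hσ : 0 < σ)
    (T : EuclideanSpace ℝ (Fin m) ≃ₗᵢ[ℝ] EuclideanSpace ℝ (Fin m)) :
    Measure.map T (gaussPi m σ 0) = gaussPi m σ 0 := by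
  have hF : Measurable fun z : EuclideanSpace ℝ (Fin m) =>
      ∏ i, gaussianPDF (0 : ℝ) ⟨σ ^ 2, sq_nonneg σ⟩ (z i) :=
    Finset.measurable_prod _ fun i _ =>
      (measurable_gaussianPDF _ _).comp ((measurable_pi_apply i).comp (WithLp.measurable_ofLp _ _))
  have : Measure.map T (gaussPi m σ 0) = Measure.map T.toMeasurableEquiv (gaussPi m σ 0) := rfl
  rw [this, gaussPi_eq_withDensity m hσ 0]
  simp only [show ∀ i : Fin m, ((0 : EuclideanSpace ℝ (Fin m)) i) = (0:ℝ) from fun _ => rfl]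
  rw [map_withDensity_equiv _ T.toMeasurableEquiv T.measurePreserving _ hF]
  congr 1
  funext z
  have hz : (T.toMeasurableEquiv.symm z : EuclideanSpace ℝ (Fin m)) = T.symm z := rfl
  rw [hz, prod_gaussianPDF_eq hσ, prod_gaussianPDF_eq hσ, T.symm.norm_map]

lemma pi_eval_le {n : ℕ} (μ : Fin n → Measure ℝ) [∀ i, IsProbabilityMeasure (μ i)]
    (i₀ : Fin n) (c : ℝ) :
    Measure.pi μ {y | y i₀ ≤ c} = μ i₀ (Set.Iic c) := by
  classical
  set s : Fin n → Set ℝ := fun i => if i = i₀ then Set.Iic c else Set.univ with hs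
  have hset : {y : Fin n → ℝ | y i₀ ≤ c} = Set.univ.pi s := by
    ext y
    simp only [Set.mem_setOf_eq, Set.mem_univ_pi, hs]
    constructor
    · intro h i
      by_cases hi : i = i₀
      · subst hi; simpa using h
      · simp [hi]
    · intro h
      have := h i₀
      simpa using this
  rw [hset, Measure.pi_pi]
  rw [Finset.prod_eq_single i₀ (fun b _ hb => by simp [hs, hb]) (by simp)]
  simp [hs]

lemma gaussianReal_Iic_scale {σ : ℝ} (hσ : 0 < σ) (r : ℝ) :
    gaussianReal 0 ⟨σ ^ 2, sq_nonneg σ⟩ (Set.Iic (σ * r)) = ENNReal.ofReal (Phi r) := by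
  have h2 : gaussianReal 0 ⟨σ ^ 2, sq_nonneg σ⟩ = Measure.map (σ * ·) (gaussianReal 0 1) := by
    rw [gaussianReal_map_const_mul σ]
    norm_num
    rfl
  rw [h2, Measure.map_apply (measurable_const_mul σ) measurableSet_Iic]
  have hpre : (σ * ·) ⁻¹' Set.Iic (σ * r) = Set.Iic r := by
    ext t
    simp [mul_le_mul_iff_right₀ hσ]
  rw [hpre, Phi, ENNReal.ofReal_toReal (measure_ne_top _ _)]

lemma key_halfspace (m : ℕ) {σ : ℝ} (hσ : 0 < σ) (δ : EuclideanSpace ℝ (Fin m))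
    (hδ : δ ≠ 0) (r : ℝ) :
    gaussPi m σ 0 {w | ⟪δ, w⟫ ≤ σ * ‖δ‖ * r} = ENNReal.ofReal (Phi r) := by
  have hδ' : 0 < ‖δ‖ := norm_pos_iff.mpr hδ
  have hm : 0 < m := by
    rcases Nat.eq_zero_or_pos m with h | h
    · subst h
      exact absurd (Subsingleton.elim δ 0) hδ
    · exact h
  let i₀ : Fin m := ⟨0, hm⟩
  set u : EuclideanSpace ℝ (Fin m) := ‖δ‖⁻¹ • δ with hu_def
  have hu : ‖u‖ = 1 := by
    rw [hu_def, norm_smul, norm_inv, norm_norm, inv_mul_cancel₀ hδ'.ne']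
  have horth : Orthonormal ℝ (({i₀} : Set (Fin m)).restrict fun _ => u) := by
    constructor
    · intro i; exact hu
    · intro i j hij
      exact absurd (Subtype.ext ((Set.mem_singleton_iff.mp i.2).trans
        (Set.mem_singleton_iff.mp j.2).symm)) hij
  obtain ⟨B, hB⟩ := horth.exists_orthonormalBasis_extension_of_card_eq
    (by simp [finrank_euclideanSpace_fin])
  have hBi₀ : B i₀ = u := hB i₀ rfl
  have hrepr : ∀ w : EuclideanSpace ℝ (Fin m), (B.repr w) i₀ = ⟪u, w⟫ := fun w => by
    rw [← hBi₀, B.repr_apply_apply]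
  have hset : {w : EuclideanSpace ℝ (Fin m) | ⟪δ, w⟫ ≤ σ * ‖δ‖ * r}
      = ⇑B.repr ⁻¹' {y : EuclideanSpace ℝ (Fin m) | y i₀ ≤ σ * r} := by
    ext w
    simp only [Set.mem_setOf_eq, Set.mem_preimage]
    rw [hrepr, hu_def]
    rw [real_inner_smul_left]
    have hconst : ‖δ‖ * (σ * r) = σ * ‖δ‖ * r := by ring
    rw [inv_mul_le_iff₀ hδ', hconst]
  have hmeas : MeasurableSet {y : EuclideanSpace ℝ (Fin m) | y i₀ ≤ σ * r} :=
    measurableSet_le (by exact (measurable_pi_apply i₀).comp (WithLp.measurable_ofLp _ _)) measurable_const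
  rw [hset, ← Measure.map_apply B.repr.continuous.measurable hmeas,
    gaussPi_map_isometry m hσ B.repr, gaussPi, Measure.map_apply (MeasurableEquiv.measurable _) hmeas]
  haveI : ∀ i : Fin m, IsProbabilityMeasure (gaussianReal 0 (⟨σ ^ 2, sq_nonneg σ⟩ : ℝ≥0)) :=
    fun _ => instIsProbabilityMeasureGaussianReal 0 ⟨σ ^ 2, sq_nonneg σ⟩
  exact (@pi_eval_le _ (fun _ => gaussianReal 0 ⟨σ ^ 2, sq_nonneg σ⟩) this i₀ (σ * r)).trans
    (gaussianReal_Iic_scale hσ r)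

/-- The Gaussian measure of the half-space `{z : ⟨δ, z − x⟩ ≤ σ‖δ‖a}` under
`N(x, σ²I)` is `Φ(a)`, and under `N(x + δ, σ²I)` it is `Φ(a − ‖δ‖/σ)`. -/
theorem halfspace_gaussian_measure (m : ℕ) (σ : ℝ) (hσ : 0 < σ)
    (x δ : EuclideanSpace ℝ (Fin m)) (hδ : δ ≠ 0) (a : ℝ) :
    gaussPi m σ x {z | ⟪δ, z - x⟫ ≤ σ * ‖δ‖ * a} = ENNReal.ofReal (Phi a) ∧
    gaussPi m σ (x + δ) {z | ⟪δ, z - x⟫ ≤ σ * ‖δ‖ * a} =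
      ENNReal.ofReal (Phi (a - ‖δ‖ / σ)) := by
  have hδ' : 0 < ‖δ‖ := norm_pos_iff.mpr hδ
  have hmeasf : Measurable fun z : EuclideanSpace ℝ (Fin m) => ⟪δ, z - x⟫ :=
    (continuous_const.inner (continuous_id.sub continuous_const)).measurable
  have hS : MeasurableSet {z : EuclideanSpace ℝ (Fin m) | ⟪δ, z - x⟫ ≤ σ * ‖δ‖ * a} :=
    measurableSet_le hmeasf measurable_const
  constructor
  · rw [gaussPi_map_add m hσ x, Measure.map_apply (measurable_add_const x) hS]
    have hpre : (· + x) ⁻¹' {z : EuclideanSpace ℝ (Fin m) | ⟪δ, z - x⟫ ≤ σ * ‖δ‖ * a}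
        = {w : EuclideanSpace ℝ (Fin m) | ⟪δ, w⟫ ≤ σ * ‖δ‖ * a} := by
      ext w
      simp [add_sub_cancel_right]
    rw [hpre]
    exact key_halfspace m hσ δ hδ a
  · rw [gaussPi_map_add m hσ (x + δ), Measure.map_apply (measurable_add_const (x + δ)) hS]
    have hpre : (· + (x + δ)) ⁻¹' {z : EuclideanSpace ℝ (Fin m) | ⟪δ, z - x⟫ ≤ σ * ‖δ‖ * a}
        = {w : EuclideanSpace ℝ (Fin m) | ⟪δ, w⟫ ≤ σ * ‖δ‖ * (a - ‖δ‖ / σ)} := by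
      ext w
      simp only [Set.mem_preimage, Set.mem_setOf_eq]
      have h1 : w + (x + δ) - x = w + δ := by abel
      rw [h1, inner_add_right, real_inner_self_eq_norm_sq]
      have h2 : σ * ‖δ‖ * (a - ‖δ‖ / σ) = σ * ‖δ‖ * a - ‖δ‖ ^ 2 := by
        field_simp
      rw [h2]
      constructor <;> intro h <;> linarith
    rw [hpre]
    exact key_halfspace m hσ δ hδ _
end

section
/- (Monotonicity of the binomial upper tail in the success probability.) Fix n ∈ ℕ and k ∈ ℕ. For 0 ≤ p ≤ q ≤ 1, the binomial upper tails satisfy T(n, p, k) ≤ T(n, q, k), where T(n, p, k) = P(X ≥ k) for X distributed Binomial(n, p). -/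
/-- The binomial upper tail `T(n, p, k) = P(X ≥ k)` for `X ~ Binomial(n, p)`,
i.e. `Σ_{j=k}^{n} C(n,j) p^j (1−p)^{n−j}`. -/
noncomputable def binomTail (n : ℕ) (p : ℝ) (k : ℕ) : ℝ :=
  ∑ j ∈ Finset.Icc k n, (n.choose j : ℝ) * p ^ j * (1 - p) ^ (n - j)

noncomputable def binomA (n j : ℕ) (x : ℝ) : ℝ :=
  (n.choose j : ℝ) * j * x ^ (j - 1) * (1 - x) ^ (n - j)

lemma binomA_succ (n j : ℕ) (x : ℝ) :
    binomA n (j + 1) x = (n.choose j : ℝ) * ((n - j : ℕ) : ℝ) * x ^ j * (1 - x) ^ (n - (j + 1)) := by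
  have h := Nat.choose_succ_right_eq n j
  have h' : ((n.choose (j + 1)) : ℝ) * ((j : ℝ) + 1) = (n.choose j : ℝ) * ((n - j : ℕ) : ℝ) := by
    exact_mod_cast congrArg (Nat.cast : ℕ → ℝ) h
  unfold binomA
  rw [Nat.add_sub_cancel]
  push_cast
  linear_combination (x ^ j * (1 - x) ^ (n - (j + 1))) * h'

lemma binomA_zero_of_lt (n j : ℕ) (x : ℝ) (h : n < j) : binomA n j x = 0 := by
  simp [binomA, Nat.choose_eq_zero_of_lt h]

lemma binomTail_hasDerivAt (n k : ℕ) (x : ℝ) :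
    HasDerivAt (fun p => binomTail n p k) (binomA n k x - binomA n (n + 1) x) x := by
  have H : HasDerivAt (fun p => binomTail n p k)
      (∑ j ∈ Finset.Icc k n, (binomA n j x - binomA n (j + 1) x)) x := by
    unfold binomTail
    apply HasDerivAt.fun_sum
    intro j hj
    simp only [Finset.mem_Icc] at hj
    have h0 : HasDerivAt (fun p : ℝ => 1 - p) (-1) x := by
      simpa using (hasDerivAt_id x).const_sub 1
    have h2 := h0.pow (n - j)
    have h1 := (hasDerivAt_pow j x).const_mul ((n.choose j : ℝ))
    have hm := h1.mul h2
    convert hm using 1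
    · rfl
    · rfl
    rw [binomA_succ n j x, show n - (j + 1) = n - j - 1 from by omega]
    unfold binomA
    simp only [Pi.pow_apply]
    ring
  rcases le_or_gt k n with hkn | hkn
  · convert H using 1
    rw [← Finset.Ico_add_one_right_eq_Icc, Finset.sum_Ico_eq_sum_range]
    simp only [add_assoc]
    rw [Finset.sum_range_sub' (fun i => binomA n (k + i) x)]
    have h1 : k + 0 = k := by omega
    have h2 : k + (n + 1 - k) = n + 1 := by omega
    rw [h1, h2]
  · have he : Finset.Icc k n = ∅ := by
      rw [Finset.Icc_eq_empty_iff]; omega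
    rw [he] at H
    simp only [Finset.sum_empty] at H
    have hz1 : binomA n k x = 0 := binomA_zero_of_lt n k x hkn
    have hz2 : binomA n (n + 1) x = 0 := binomA_zero_of_lt n (n + 1) x (by omega)
    rw [hz1, hz2, sub_zero]
    exact H

lemma binomTail_deriv_eq (n k : ℕ) (x : ℝ) :
    deriv (fun p => binomTail n p k) x = binomA n k x := by
  rw [(binomTail_hasDerivAt n k x).deriv, binomA_zero_of_lt n (n + 1) x (by omega), sub_zero]

/-- Monotonicity of the binomial upper tail in the success probability:
for `0 ≤ p ≤ q ≤ 1`, `T(n, p, k) ≤ T(n, q, k)`. -/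
theorem binomTail_mono (n k : ℕ) (p q : ℝ) (hp : 0 ≤ p) (hpq : p ≤ q) (hq : q ≤ 1) :
    binomTail n p k ≤ binomTail n q k := by
  have hmono : MonotoneOn (fun p => binomTail n p k) (Set.Icc (0:ℝ) 1) := by
    apply monotoneOn_of_deriv_nonneg (convex_Icc 0 1)
    · exact fun x _ => (binomTail_hasDerivAt n k x).continuousAt.continuousWithinAt
    · exact fun x _ =>
        (binomTail_hasDerivAt n k x).differentiableAt.differentiableWithinAt
    · intro x hx
      rw [interior_Icc] at hx
      rw [binomTail_deriv_eq]
      unfold binomA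
      have h1 : (0:ℝ) ≤ x := hx.1.le
      have h2 : (0:ℝ) ≤ 1 - x := by linarith [hx.2]
      have hc : (0:ℝ) ≤ (n.choose k : ℝ) * k := by positivity
      exact mul_nonneg (mul_nonneg hc (pow_nonneg h1 _)) (pow_nonneg h2 _)
  exact hmono ⟨hp, le_trans hpq hq⟩ ⟨le_trans hp hpq, hq⟩ hpq
end

section
/- (Superuniformity of the one-sided binomial p-value.) Fix n ∈ ℕ, a threshold τ ∈ [0,1], and a true success probability p ∈ [0,1] with p ≤ τ (the null hypothesis). Let X be distributed Binomial(n, p), and define the p-value pv(x) = T(n, τ, x) for x ∈ {0,…,n}, where T(n, τ, x) is the Binomial(n, τ) upper tail at x. Then for every u ∈ [0,1], P(pv(X) ≤ u) ≤ u. -/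
/-- The binomial probability mass `P(X = j) = C(n,j) p^j (1−p)^{n−j}` for
`X ~ Binomial(n, p)`. -/
noncomputable def binomProb (n : ℕ) (p : ℝ) (j : ℕ) : ℝ :=
  (n.choose j : ℝ) * p ^ j * (1 - p) ^ (n - j)

lemma binomProb_nonneg (n : ℕ) (p : ℝ) (hp0 : 0 ≤ p) (hp1 : p ≤ 1) (j : ℕ) :
    0 ≤ binomProb n p j := by
  have h1 : (0:ℝ) ≤ 1 - p := by linarith
  exact mul_nonneg (mul_nonneg (by positivity) (pow_nonneg hp0 j)) (pow_nonneg h1 _)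

lemma binomTail_zero (n : ℕ) (p : ℝ) : binomTail n p 0 = 1 := by
  have h : Finset.Icc 0 n = Finset.range (n + 1) := by
    ext x; simp [Nat.lt_succ_iff]
  have hp : ((p + (1 - p)) : ℝ) ^ n
      = ∑ j ∈ Finset.range (n + 1), p ^ j * (1 - p) ^ (n - j) * (n.choose j : ℝ) :=
    add_pow p (1 - p) n
  simp only [add_sub_cancel, one_pow] at hp
  rw [binomTail, h,
    show ∑ j ∈ Finset.range (n + 1), (n.choose j : ℝ) * p ^ j * (1 - p) ^ (n - j)
      = ∑ j ∈ Finset.range (n + 1), p ^ j * (1 - p) ^ (n - j) * (n.choose j : ℝ) from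
      Finset.sum_congr rfl (fun j _ => by ring), ← hp]

lemma binomTail_anti (n : ℕ) (p : ℝ) (hp0 : 0 ≤ p) (hp1 : p ≤ 1) :
    Antitone (binomTail n p) := by
  apply antitone_nat_of_succ_le
  intro k
  apply Finset.sum_le_sum_of_subset_of_nonneg (Finset.Icc_subset_Icc_left (Nat.le_succ k))
  intro j _ _
  exact binomProb_nonneg n p hp0 hp1 j

lemma sum_Icc_succ_map (n k : ℕ) (f : ℕ → ℝ) :
    ∑ j ∈ Finset.Icc (k + 1) (n + 1), f j = ∑ i ∈ Finset.Icc k n, f (i + 1) := by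
  rw [← Finset.map_add_right_Icc k n 1, Finset.sum_map]
  rfl

lemma binomTail_succ (n k : ℕ) (p : ℝ) :
    binomTail (n + 1) p (k + 1) = p * binomTail n p k + (1 - p) * binomTail n p (k + 1) := by
  have h2 : ∑ i ∈ Finset.Icc k n, (n.choose (i + 1) : ℝ) * p ^ (i + 1) * (1 - p) ^ (n - i)
      = (1 - p) * binomTail n p (k + 1) := by
    have := sum_Icc_succ_map n k (fun j => (n.choose j : ℝ) * p ^ j * (1 - p) ^ (n + 1 - j))
    simp only [Nat.succ_sub_succ] at this
    rw [← this]
    have hsub : Finset.Icc (k + 1) n ⊆ Finset.Icc (k + 1) (n + 1) :=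
      Finset.Icc_subset_Icc_right (Nat.le_succ n)
    rw [← Finset.sum_subset hsub (by
      intro j hj hnj
      have hj1 : j ∈ Finset.Icc (k+1) (n+1) := hj
      have : n < j := by
        rcases Finset.mem_Icc.1 hj1 with ⟨h1, h2⟩
        by_contra h
        exact hnj (Finset.mem_Icc.mpr ⟨h1, by omega⟩)
      simp [Nat.choose_eq_zero_of_lt this])]
    rw [binomTail, Finset.mul_sum]
    apply Finset.sum_congr rfl
    intro j hj
    have hjn : j ≤ n := (Finset.mem_Icc.1 hj).2
    rw [show n + 1 - j = (n - j) + 1 by omega, pow_succ]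
    ring
  rw [binomTail]
  rw [sum_Icc_succ_map n k (fun j => ((n+1).choose j : ℝ) * p ^ j * (1 - p) ^ (n + 1 - j))]
  have : ∀ i ∈ Finset.Icc k n,
      (((n+1).choose (i+1) : ℝ)) * p ^ (i+1) * (1 - p) ^ (n + 1 - (i+1))
      = p * ((n.choose i : ℝ) * p ^ i * (1 - p) ^ (n - i))
        + (n.choose (i+1) : ℝ) * p ^ (i+1) * (1 - p) ^ (n - i) := by
    intro i hi
    rw [Nat.succ_sub_succ, Nat.choose_succ_succ]
    push_cast
    ring
  rw [Finset.sum_congr rfl this, Finset.sum_add_distrib, h2, binomTail, ← Finset.mul_sum]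
  rfl

lemma binomTail_mono_s8 (n : ℕ) (p τ : ℝ) (hp0 : 0 ≤ p) (hpτ : p ≤ τ) (hτ1 : τ ≤ 1) :
    ∀ k, binomTail n p k ≤ binomTail n τ k := by
  have hτ0 : 0 ≤ τ := le_trans hp0 hpτ
  have hp1 : p ≤ 1 := le_trans hpτ hτ1
  induction n with
  | zero =>
    intro k
    cases k with
    | zero => simp [binomTail]
    | succ k => simp [binomTail, Finset.Icc_eq_empty_of_lt (Nat.lt_of_lt_of_le Nat.zero_lt_one (Nat.le_add_left 1 k))]
  | succ n ih =>
    intro k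
    cases k with
    | zero => rw [binomTail_zero, binomTail_zero]
    | succ k =>
      rw [binomTail_succ, binomTail_succ]
      have h1 := ih k
      have h2 := ih (k + 1)
      have h3 := binomTail_anti n p hp0 hp1 (Nat.le_succ k)
      nlinarith [mul_nonneg (sub_nonneg.2 hpτ) (sub_nonneg.2 h3),
        mul_nonneg hτ0 (sub_nonneg.2 h1),
        mul_nonneg (sub_nonneg.2 hτ1) (sub_nonneg.2 h2)]

/-- Superuniformity of the one-sided binomial p-value: if `X ~ Binomial(n, p)` with
`p ≤ τ` (the null hypothesis) and the p-value is `pv(x) = T(n, τ, x)`, then for every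
`u ∈ [0,1]` we have `P(pv(X) ≤ u) ≤ u`. -/
theorem binomial_pvalue_superuniform (n : ℕ) (τ p : ℝ)
    (hτ : τ ∈ Set.Icc (0 : ℝ) 1) (hp0 : 0 ≤ p) (hpτ : p ≤ τ)
    (u : ℝ) (hu : u ∈ Set.Icc (0 : ℝ) 1) :
    ∑ x ∈ (Finset.range (n + 1)).filter (fun x => binomTail n τ x ≤ u),
      binomProb n p x ≤ u := by
  obtain ⟨hτ0, hτ1⟩ := hτ
  obtain ⟨hu0, hu1⟩ := hu
  set S := (Finset.range (n + 1)).filter (fun x => binomTail n τ x ≤ u) with hS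
  by_cases hne : S.Nonempty
  · set k := S.min' hne with hk
    have hkS : k ∈ S := S.min'_mem hne
    have hk_le : binomTail n τ k ≤ u := (Finset.mem_filter.1 hkS).2
    have hsub : S ⊆ Finset.Icc k n := by
      intro x hx
      rw [Finset.mem_Icc]
      exact ⟨S.min'_le x hx, Nat.lt_succ_iff.1 (Finset.mem_range.1 (Finset.mem_filter.1 hx).1)⟩
    have hp1 : p ≤ 1 := le_trans hpτ hτ1
    calc ∑ x ∈ S, binomProb n p x ≤ ∑ x ∈ Finset.Icc k n, binomProb n p x := by
          apply Finset.sum_le_sum_of_subset_of_nonneg hsub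
          intro j _ _
          exact binomProb_nonneg n p hp0 hp1 j
      _ = binomTail n p k := rfl
      _ ≤ binomTail n τ k := binomTail_mono_s8 n p τ hp0 hpτ hτ1 k
      _ ≤ u := hk_le
  · rw [Finset.not_nonempty_iff_eq_empty.1 hne]
    simpa using hu0
end

section
/- (Holm's step-down procedure controls the family-wise error rate.) Let (Ω, 𝔽, P) be a probability space, let N ≥ 1, let PV_1, …, PV_N : Ω → [0,1] be measurable p-values, and let T ⊆ {1,…,N} be the set of true null hypotheses, satisfying superuniformity: for every i ∈ T and u ∈ [0,1], P(PV_i ≤ u) ≤ u. Let α ∈ [0,1] and say that hypothesis i is rejected (closed-testing characterization of Holm's procedure) iff for every nonempty subset S ⊆ {1,…,N} containing i, min_{j ∈ S} PV_j ≤ α/|S|. Then the probability that any true null hypothesis is rejected is at most α: P(∃ i ∈ T, i rejected) ≤ α. -/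
open MeasureTheory

/-- Holm's step-down procedure controls the family-wise error rate. Using the
closed-testing characterization, hypothesis `i` is rejected iff every subset `S`
containing `i` satisfies `min_{j ∈ S} PV_j ≤ α/|S|`. If each p-value with index in the
set `T` of true nulls is superuniform, the probability that any true null is rejected
is at most `α`. -/
theorem holm_fwer_control {Ω : Type*} [MeasurableSpace Ω]
    (μ : Measure Ω) [IsProbabilityMeasure μ]
    (N : ℕ) (hN : 1 ≤ N) (PV : Fin N → Ω → ℝ)
    (hmeas : ∀ i, Measurable (PV i))
    (hrange : ∀ i ω, PV i ω ∈ Set.Icc (0 : ℝ) 1)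
    (T : Finset (Fin N))
    (hsuper : ∀ i ∈ T, ∀ u ∈ Set.Icc (0 : ℝ) 1,
      μ {ω | PV i ω ≤ u} ≤ ENNReal.ofReal u)
    (α : ℝ) (hα : α ∈ Set.Icc (0 : ℝ) 1) :
    μ {ω | ∃ i ∈ T, ∀ S : Finset (Fin N), S.Nonempty → i ∈ S →
        ∃ j ∈ S, PV j ω ≤ α / S.card} ≤ ENNReal.ofReal α := by
  rcases T.eq_empty_or_nonempty with hT | hT
  · simp [hT]
  · have hcard : (0:ℝ) < T.card := by exact_mod_cast Finset.card_pos.mpr hT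
    have hcard1 : (1:ℝ) ≤ T.card := by exact_mod_cast Finset.card_pos.mpr hT
    have hu : α / T.card ∈ Set.Icc (0:ℝ) 1 := by
      constructor
      · exact div_nonneg hα.1 hcard.le
      · rw [div_le_one hcard]
        exact hα.2.trans hcard1
    have hsub : {ω | ∃ i ∈ T, ∀ S : Finset (Fin N), S.Nonempty → i ∈ S →
        ∃ j ∈ S, PV j ω ≤ α / S.card} ⊆ ⋃ j ∈ T, {ω | PV j ω ≤ α / T.card} := by
      rintro ω ⟨i, hi, h⟩
      obtain ⟨j, hj, hle⟩ := h T hT hi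
      exact Set.mem_biUnion hj hle
    calc μ _ ≤ μ (⋃ j ∈ T, {ω | PV j ω ≤ α / T.card}) := measure_mono hsub
      _ ≤ ∑ j ∈ T, μ {ω | PV j ω ≤ α / T.card} := measure_biUnion_finset_le _ _
      _ ≤ ∑ _j ∈ T, ENNReal.ofReal (α / T.card) :=
          Finset.sum_le_sum fun j hj => hsuper j hj _ hu
      _ = T.card • ENNReal.ofReal (α / T.card) := Finset.sum_const _
      _ = ENNReal.ofReal α := by
          rw [nsmul_eq_mul, ← ENNReal.ofReal_natCast, ← ENNReal.ofReal_mul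
            (by positivity), mul_div_cancel₀ _ hcard.ne']
end

section
/- (Generalized Bonferroni procedure controls the k-FWER.) Let (Ω, 𝔽, P) be a probability space, let N ≥ 1, let PV_1, …, PV_N : Ω → [0,1] be measurable p-values, and let T ⊆ {1,…,N} be the set of true null hypotheses, satisfying superuniformity: for every i ∈ T and u ∈ [0,1], P(PV_i ≤ u) ≤ u. Let α ∈ [0,1], let k ≥ 1, and reject hypothesis i iff PV_i ≤ k·α/N. Then the probability of making at least k type I errors is at most α: P(|{i ∈ T : PV_i ≤ k·α/N}| ≥ k) ≤ α. -/
open MeasureTheory ENNReal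

/-- The generalized Bonferroni procedure controls the `k`-FWER: rejecting hypothesis `i`
iff `PV_i ≤ k·α/N`, the probability of making at least `k` type I errors (rejections of
true nulls `i ∈ T`) is at most `α`, provided each true-null p-value is superuniform. -/
theorem generalized_bonferroni_kfwer_control {Ω : Type*} [MeasurableSpace Ω]
    (μ : Measure Ω) [IsProbabilityMeasure μ]
    (N : ℕ) (hN : 1 ≤ N) (PV : Fin N → Ω → ℝ)
    (hmeas : ∀ i, Measurable (PV i))
    (hrange : ∀ i ω, PV i ω ∈ Set.Icc (0 : ℝ) 1)
    (T : Finset (Fin N))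
    (hsuper : ∀ i ∈ T, ∀ u ∈ Set.Icc (0 : ℝ) 1,
      μ {ω | PV i ω ≤ u} ≤ ENNReal.ofReal u)
    (α : ℝ) (hα : α ∈ Set.Icc (0 : ℝ) 1) (k : ℕ) (hk : 1 ≤ k) :
    μ {ω | k ≤ (T.filter (fun i => PV i ω ≤ k * α / N)).card} ≤ ENNReal.ofReal α := by
  set t : ℝ := k * α / N with ht
  have hN0 : (0:ℝ) < N := by exact_mod_cast hN
  obtain ⟨hα0, hα1⟩ := hα
  have ht0 : 0 ≤ t := by positivity
  -- the counting function as an ENNReal-valued function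
  set g : Ω → ENNReal := fun ω => ∑ i ∈ T, Set.indicator {ω | PV i ω ≤ t} (fun _ => 1) ω
    with hg
  have hSmeas : ∀ i : Fin N, MeasurableSet {ω | PV i ω ≤ t} := fun i =>
    measurableSet_le (hmeas i) measurable_const
  have hgmeas : Measurable g := by
    apply Finset.measurable_sum
    intro i _
    exact (measurable_const.indicator (hSmeas i))
  have hgcard : ∀ ω, g ω = ((T.filter (fun i => PV i ω ≤ t)).card : ENNReal) := by
    intro ω
    rw [hg]
    rw [Finset.card_filter]
    push_cast
    apply Finset.sum_congr rfl
    intro i _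
    by_cases h : PV i ω ≤ t
    · simp [Set.indicator_of_mem, h, Set.mem_setOf_eq]
    · simp [Set.indicator_of_notMem, h, Set.mem_setOf_eq]
  -- each term bounded by ofReal t
  have hterm : ∀ i ∈ T, μ {ω | PV i ω ≤ t} ≤ ENNReal.ofReal t := by
    intro i hi
    by_cases h1 : t ≤ 1
    · exact hsuper i hi t ⟨ht0, h1⟩
    · calc μ {ω | PV i ω ≤ t} ≤ 1 := prob_le_one
        _ ≤ ENNReal.ofReal t := by
            rw [show (1:ENNReal) = ENNReal.ofReal 1 by simp]
            exact ENNReal.ofReal_le_ofReal (le_of_lt (lt_of_not_ge h1))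
  -- integral bound
  have hint : ∫⁻ ω, g ω ∂μ ≤ ENNReal.ofReal (k * α) := by
    rw [hg, lintegral_finset_sum _ (fun i _ => measurable_const.indicator (hSmeas i))]
    have : ∀ i ∈ T, ∫⁻ ω, Set.indicator {ω | PV i ω ≤ t} (fun _ => (1:ENNReal)) ω ∂μ
        ≤ ENNReal.ofReal t := by
      intro i hi
      exact le_of_le_of_eq (le_of_eq (lintegral_indicator_one (hSmeas i))) rfl |>.trans (hterm i hi)
    calc ∑ i ∈ T, ∫⁻ ω, Set.indicator {ω | PV i ω ≤ t} (fun _ => (1:ENNReal)) ω ∂μ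
        ≤ ∑ _i ∈ T, ENNReal.ofReal t := Finset.sum_le_sum this
      _ = T.card * ENNReal.ofReal t := by rw [Finset.sum_const, nsmul_eq_mul]
      _ ≤ N * ENNReal.ofReal t := by
          gcongr
          exact_mod_cast Finset.card_le_card (Finset.subset_univ T) |>.trans_eq
            (by simp)
      _ = ENNReal.ofReal (N * t) := by
          rw [ENNReal.ofReal_mul (by positivity)]
          simp
      _ = ENNReal.ofReal (k * α) := by
          congr 1
          rw [ht]
          field_simp
  -- Markov
  have hmarkov := mul_meas_ge_le_lintegral₀ (hgmeas.aemeasurable (μ := μ)) (k : ENNReal)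
  have hset : {ω | k ≤ (T.filter (fun i => PV i ω ≤ t)).card}
      = {ω | (k : ENNReal) ≤ g ω} := by
    ext ω
    simp [hgcard ω, Nat.cast_le]
  rw [hset]
  have hk0 : (k : ENNReal) ≠ 0 := by exact_mod_cast Nat.pos_of_ne_zero (fun h => by omega) |>.ne'
  have hktop : (k : ENNReal) ≠ ⊤ := ENNReal.natCast_ne_top k
  have key : (k : ENNReal) * μ {ω | (k : ENNReal) ≤ g ω} ≤ (k : ENNReal) * ENNReal.ofReal α := by
    calc (k : ENNReal) * μ {ω | (k : ENNReal) ≤ g ω} ≤ ∫⁻ ω, g ω ∂μ := hmarkov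
      _ ≤ ENNReal.ofReal (k * α) := hint
      _ = (k : ENNReal) * ENNReal.ofReal α := by
          rw [ENNReal.ofReal_mul (by positivity)]
          simp
  exact (ENNReal.mul_le_mul_iff_right hk0 hktop).mp key
end

section
/- (Coverage of the Clopper–Pearson lower confidence bound.) Fix n ≥ 1, α ∈ (0,1), and a true success probability p ∈ [0,1]. For x ∈ {0,…,n} define the lower confidence bound L(x) = sInf { q ∈ [0,1] : T(n, q, x) > α }, where T(n, q, x) is the Binomial(n, q) upper tail at x (so L(0) = 0). If X is distributed Binomial(n, p), then P(L(X) ≤ p) ≥ 1 − α. -/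
/-- The Clopper–Pearson lower confidence bound
`L(x) = sInf { q ∈ [0,1] : T(n, q, x) > α }`. -/
noncomputable def cpLower (n : ℕ) (α : ℝ) (x : ℕ) : ℝ :=
  sInf {q : ℝ | q ∈ Set.Icc (0 : ℝ) 1 ∧ α < binomTail n q x}

/-- Coverage of the Clopper–Pearson lower confidence bound: if `X ~ Binomial(n, p)`,
then `P(L(X) ≤ p) ≥ 1 − α`. -/
theorem clopper_pearson_coverage (n : ℕ) (hn : 1 ≤ n)
    (α : ℝ) (hα : α ∈ Set.Ioo (0 : ℝ) 1) (p : ℝ) (hp : p ∈ Set.Icc (0 : ℝ) 1) :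
    1 - α ≤ ∑ x ∈ (Finset.range (n + 1)).filter (fun x => cpLower n α x ≤ p),
      binomProb n p x := by
  obtain ⟨hp0, hp1⟩ := hp
  obtain ⟨hα0, hα1⟩ := hα
  have hnn : ∀ x, 0 ≤ binomProb n p x := by
    intro x
    unfold binomProb
    have h1 : (0:ℝ) ≤ 1 - p := by linarith
    positivity
  -- total mass is 1
  have htot : ∑ x ∈ Finset.range (n + 1), binomProb n p x = 1 := by
    have h := add_pow p (1 - p) n
    have hone : p + (1 - p) = 1 := by ring
    rw [hone, one_pow] at h
    rw [h]
    refine Finset.sum_congr rfl fun k _ => ?_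
    unfold binomProb
    ring
  -- split into event and complement
  set E := (Finset.range (n + 1)).filter (fun x => cpLower n α x ≤ p) with hE
  set C := (Finset.range (n + 1)).filter (fun x => ¬ cpLower n α x ≤ p) with hC
  have hsplit : (∑ x ∈ E, binomProb n p x) + (∑ x ∈ C, binomProb n p x) = 1 := by
    rw [hE, hC, Finset.sum_filter_add_sum_filter_not, htot]
  -- bound the complement sum by α
  have hCle : (∑ x ∈ C, binomProb n p x) ≤ α := by
    rcases Finset.eq_empty_or_nonempty C with hCe | hCne
    · rw [hCe]; simpa using hα0.le
    · set m := C.min' hCne with hm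
      have hmC : m ∈ C := C.min'_mem hCne
      rw [hC, Finset.mem_filter] at hmC
      obtain ⟨hmr, hmgt⟩ := hmC
      push_neg at hmgt
      -- p < cpLower n α m implies binomTail n p m ≤ α
      have htail : binomTail n p m ≤ α := by
        by_contra hcon
        push_neg at hcon
        have hpS : p ∈ {q : ℝ | q ∈ Set.Icc (0 : ℝ) 1 ∧ α < binomTail n q m} :=
          ⟨⟨hp0, hp1⟩, hcon⟩
        have hbdd : BddBelow {q : ℝ | q ∈ Set.Icc (0 : ℝ) 1 ∧ α < binomTail n q m} :=
          ⟨0, fun q hq => hq.1.1⟩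
        have := csInf_le hbdd hpS
        rw [← cpLower] at this
        linarith
      -- C ⊆ Icc m n
      have hsub : C ⊆ Finset.Icc m n := by
        intro x hx
        have hxm : m ≤ x := Finset.min'_le C x hx
        rw [hC, Finset.mem_filter, Finset.mem_range] at hx
        exact Finset.mem_Icc.mpr ⟨hxm, Nat.lt_succ_iff.mp hx.1⟩
      have hle : (∑ x ∈ C, binomProb n p x) ≤ ∑ x ∈ Finset.Icc m n, binomProb n p x :=
        Finset.sum_le_sum_of_subset_of_nonneg hsub (fun x _ _ => hnn x)
      have : (∑ x ∈ Finset.Icc m n, binomProb n p x) = binomTail n p m := by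
        unfold binomTail binomProb; rfl
      linarith
  linarith
end
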